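/- Let q and n satisfy q > ⌈n/2⌉, and let a_1, ..., a_n be residues mod q with gcd(a_i, q) = 1 for all i. Then the number of subsets I ⊆ [n] with ∑_{i∈I} a_i ≡ 0 (mod q) is at most C(n, ⌊n/2⌋), the ordinary central binomial coefficient. -/

import Mathlib

open Finset

namespace VW

/-- wrapped binomial row: sum of `C(n,t)` over `t ≤ n` with `t ≡ x (mod q)` -/
def W (q n x : ℕ) : ℕ :=
  ∑ t ∈ Finset.range (n+1), if ((t : ZMod q) = (x : ZMod q)) then n.choose t else 0

lemma modeq_close {q t x : ℕ} (h : t ≡ x [MOD q]) (h1 : t < x + q) (h2 : x < t + q) :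
    t = x := by
  obtain ⟨k, hk⟩ := (Nat.modEq_iff_dvd).mp h
  have hq : (0:ℤ) ≤ q := by positivity
  rcases lt_trichotomy k 0 with hh | hh | hh
  · have hb : (q:ℤ) * k ≤ -(q:ℤ) := by nlinarith
    rw [← hk] at hb; omega
  · rw [hh, mul_zero] at hk; omega
  · have hb : (q:ℤ) ≤ q * k := by nlinarith
    rw [← hk] at hb; omega

lemma modeq_close2 {q t x : ℕ} (h : t ≡ x [MOD q]) (h1 : t < x + q) (h2 : x < t + 2*q) :
    t = x ∨ t + q = x := by
  obtain ⟨k, hk⟩ := (Nat.modEq_iff_dvd).mp h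
  have hq : (0:ℤ) ≤ q := by positivity
  rcases lt_trichotomy k 0 with hh | hh | hh
  · have hb : (q:ℤ) * k ≤ -(q:ℤ) := by nlinarith
    rw [← hk] at hb; omega
  · rw [hh, mul_zero] at hk; omega
  · rcases eq_or_lt_of_le (by omega : (1:ℤ) ≤ k) with hh2 | hh2
    · rw [← hh2, mul_one] at hk; omega
    · have hb : 2*(q:ℤ) ≤ q * k := by nlinarith
      rw [← hk] at hb; omega

lemma W_eq_single {q n x : ℕ} (hx : x < q) (hxq : n < x + q) :
    W q n x = n.choose x := by
  unfold W
  rw [← Finset.sum_filter]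
  have hsub : (Finset.range (n+1)).filter (fun t : ℕ => ((t : ZMod q) = (x : ZMod q))) ⊆ {x} := by
    intro t ht
    simp only [Finset.mem_filter, Finset.mem_range] at ht
    obtain ⟨ht1, ht2⟩ := ht
    have := (ZMod.natCast_eq_natCast_iff t x q).mp ht2
    simp only [Finset.mem_singleton]
    exact modeq_close this (by omega) (by omega)
  rw [Finset.sum_subset hsub]
  · simp
  · intro t ht hnt
    simp only [Finset.mem_singleton] at ht
    rcases Nat.lt_or_ge t (n+1) with hc | hc
    · exact absurd (Finset.mem_filter.mpr ⟨Finset.mem_range.mpr hc, by rw [ht]⟩) hnt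
    · exact Nat.choose_eq_zero_of_lt (by omega)

lemma W_eq_pair {q n x : ℕ} (hq1 : 0 < q) (hx : q ≤ x) (hx2 : x < 2*q) (hxq : n < x + q) :
    W q n x = n.choose x + n.choose (x - q) := by
  unfold W
  rw [← Finset.sum_filter]
  have hsub : (Finset.range (n+1)).filter (fun t : ℕ => ((t : ZMod q) = (x : ZMod q))) ⊆ {x, x - q} := by
    intro t ht
    simp only [Finset.mem_filter, Finset.mem_range] at ht
    obtain ⟨ht1, ht2⟩ := ht
    have := (ZMod.natCast_eq_natCast_iff t x q).mp ht2
    have := modeq_close2 this (by omega) (by omega)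
    simp only [Finset.mem_insert, Finset.mem_singleton]
    omega
  rw [Finset.sum_subset hsub]
  · rw [Finset.sum_pair (by omega : x ≠ x - q)]
  · intro t ht hnt
    simp only [Finset.mem_insert, Finset.mem_singleton] at ht
    have hchoose : n < t := by
      rcases Nat.lt_or_ge t (n+1) with hc | hc
      · exfalso
        apply hnt
        refine Finset.mem_filter.mpr ⟨Finset.mem_range.mpr hc, ?_⟩
        rcases ht with h | h
        · rw [h]
        · rw [h]
          have hxq' : (x - q) + q = x := by omega
          calc ((x - q : ℕ) : ZMod q) = (((x - q) + q : ℕ) : ZMod q) := by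
                push_cast; rw [ZMod.natCast_self]; ring
            _ = ((x : ℕ) : ZMod q) := by rw [hxq']
      · omega
    exact Nat.choose_eq_zero_of_lt hchoose

lemma W_pascal (q n x : ℕ) : W q (n+1) (x+1) = W q n x + W q n (x+1) := by
  unfold W
  rw [Finset.sum_range_succ' (fun t => if ((t : ZMod q) = ((x+1:ℕ) : ZMod q)) then (n+1).choose t else 0) (n+1)]
  have hcond : ∀ i : ℕ, (((i+1:ℕ) : ZMod q) = ((x+1:ℕ) : ZMod q)) ↔ ((i : ZMod q) = (x : ZMod q)) := by
    intro i
    push_cast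
    constructor
    · intro h; exact add_right_cancel h
    · intro h; rw [h]
  have hsplit : ∀ i : ℕ, (if (((i+1:ℕ) : ZMod q) = ((x+1:ℕ) : ZMod q)) then (n+1).choose (i+1) else 0)
      = (if ((i : ZMod q) = (x : ZMod q)) then n.choose i else 0)
        + (if ((i : ZMod q) = (x : ZMod q)) then n.choose (i+1) else 0) := by
    intro i
    rw [Nat.choose_succ_succ]
    by_cases h : ((i : ZMod q) = (x : ZMod q))
    · rw [if_pos ((hcond i).mpr h), if_pos h, if_pos h]
    · rw [if_neg (fun hh => h ((hcond i).mp hh)), if_neg h, if_neg h]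
  rw [Finset.sum_congr rfl (fun i _ => hsplit i), Finset.sum_add_distrib]
  -- now : (∑ i in range (n+1), ite .. (C n i)) + (∑ i in range (n+1), ite .. (C n (i+1))) + ite (0 = x+1) 1
  have h2 : (∑ i ∈ Finset.range (n+1), if ((i : ZMod q) = (x : ZMod q)) then n.choose (i+1) else 0)
      + (if (((0:ℕ) : ZMod q) = ((x+1:ℕ) : ZMod q)) then (n+1).choose 0 else 0)
      = W q n (x+1) := by
    unfold W
    rw [Finset.sum_range_succ' (fun t => if ((t : ZMod q) = ((x+1:ℕ) : ZMod q)) then n.choose t else 0) n]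
    rw [Finset.sum_range_succ (fun i => if ((i : ZMod q) = (x : ZMod q)) then n.choose (i+1) else 0) n]
    have hlast : (if ((n : ZMod q) = (x : ZMod q)) then n.choose (n+1) else 0) = 0 := by
      rw [Nat.choose_succ_self]; simp
    rw [hlast]
    have hcongr : ∀ i ∈ Finset.range n, (if ((i : ZMod q) = (x : ZMod q)) then n.choose (i+1) else 0)
        = (if (((i+1:ℕ) : ZMod q) = ((x+1:ℕ) : ZMod q)) then n.choose (i+1) else 0) := by
      intro i _
      by_cases h : ((i : ZMod q) = (x : ZMod q))
      · rw [if_pos h, if_pos ((hcond i).mpr h)]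
      · rw [if_neg h, if_neg (fun hh => h ((hcond i).mp hh))]
    rw [Finset.sum_congr rfl hcongr]
    simp
  unfold W at h2
  omega

lemma W_symm (q n x y : ℕ) (h : ((x : ZMod q) + (y : ZMod q) = (n : ZMod q))) :
    W q n x = W q n y := by
  unfold W
  rw [← Finset.sum_range_reflect (fun t => if ((t : ZMod q) = (x : ZMod q)) then n.choose t else 0) (n+1)]
  apply Finset.sum_congr rfl
  intro j hj
  simp only [Finset.mem_range] at hj
  have hj' : j ≤ n := by omega
  have harg : n + 1 - 1 - j = n - j := by omega
  rw [harg]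
  have hchoose : n.choose (n - j) = n.choose j := Nat.choose_symm hj'
  have hcast : ((n - j : ℕ) : ZMod q) = (n : ZMod q) - (j : ZMod q) := by
    push_cast [Nat.cast_sub hj']
    ring
  have hcond : (((n - j : ℕ) : ZMod q) = (x : ZMod q)) ↔ ((j : ZMod q) = (y : ZMod q)) := by
    rw [hcast]
    constructor
    · intro hh
      have : (j : ZMod q) = (n : ZMod q) - (x : ZMod q) := by
        rw [← hh]; ring
      rw [this, ← h]; ring
    · intro hh
      rw [hh, ← h]; ring
  by_cases hc : ((j : ZMod q) = (y : ZMod q))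
  · rw [if_pos (hcond.mpr hc), if_pos hc, hchoose]
  · rw [if_neg (fun hh => hc (hcond.mp hh)), if_neg hc]

-- C(n, x+1) ≤ C(n, x) for x past the middle
lemma choose_dec {n x : ℕ} (h : n ≤ 2*x) : n.choose (x+1) ≤ n.choose x := by
  rcases Nat.lt_or_ge n (x+1) with hc | hc
  · rw [Nat.choose_eq_zero_of_lt hc]; exact Nat.zero_le _
  · -- x + 1 ≤ n
    have h1 : n.choose (x+1) = n.choose (n - (x+1)) := (Nat.choose_symm hc).symm
    have h2 : n.choose x = n.choose (n - x) := (Nat.choose_symm (by omega)).symm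
    rw [h1, h2]
    have h3 : n - x = (n - (x+1)) + 1 := by omega
    rw [h3]
    rcases Nat.eq_or_lt_of_le (h : n ≤ 2*x) with he | hlt
    · -- n = 2x : n - (x+1) = x - 1 < n/2
      exact Nat.choose_le_succ_of_lt_half_left (by omega)
    · exact Nat.choose_le_succ_of_lt_half_left (by omega)

lemma choose_dec_strict {n x : ℕ} (h : n ≤ 2*x) (hx : x + 1 ≤ n) :
    n.choose (x+1) < n.choose x := by
  have hid : n.choose (x+1) * (x+1) = n.choose x * (n - x) := Nat.choose_succ_right_eq n x
  have hpos : 0 < n.choose x := Nat.choose_pos (by omega)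
  by_contra hcon
  push_neg at hcon
  have h1 : n.choose x * (x+1) ≤ n.choose (x+1) * (x+1) := Nat.mul_le_mul_right _ hcon
  rw [hid] at h1
  have h2 : n - x < x + 1 := by omega
  have h3 : n.choose x * (n - x) < n.choose x * (x+1) :=
    Nat.mul_lt_mul_of_pos_left h2 hpos
  omega

lemma choose_mono_half {M a b : ℕ} (hab : a ≤ b) (hb : 2*b ≤ M) : M.choose a ≤ M.choose b := by
  induction b, hab using Nat.le_induction with
  | base => exact le_refl _
  | succ b hb' ih =>
    have h1 : M.choose a ≤ M.choose b := ih (by omega)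
    exact le_trans h1 (Nat.choose_le_succ_of_lt_half_left (by omega))

-- the key "folded unimodality" inequality
lemma core {M y z : ℕ} (hy : 1 ≤ y) (hyz : y < z) (hsum : 2*y + 2*z + 1 ≤ M) :
    (M - 2*y) * M.choose y ≤ (M - 2*z) * M.choose z := by
  have h1 : M.choose (y+1) ≤ M.choose z := choose_mono_half (by omega) (by omega)
  have h2 : M.choose (y+1) * (y+1) = M.choose y * (M - y) := Nat.choose_succ_right_eq M y
  -- (M - 2y)*C(M,y)*(y+1) ≤ (2y+1)*C(M,y+1)*(y+1) ≤ (M-2z)*C(M,z)*(y+1)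
  have key1 : (M - 2*y) * M.choose y * (y+1) ≤ (2*y+1) * (M.choose (y+1) * (y+1)) := by
    rw [h2]
    have e1 : M - y = (M - 2*y) + y := by omega
    have : (M - 2*y) * (y + 1) ≤ (2*y+1) * (M - y) := by
      rw [e1]; nlinarith
    calc (M - 2*y) * M.choose y * (y+1) = ((M - 2*y) * (y+1)) * M.choose y := by ring
      _ ≤ ((2*y+1) * (M - y)) * M.choose y := Nat.mul_le_mul_right _ this
      _ = (2*y+1) * (M.choose y * (M - y)) := by ring
  have key2 : (2*y+1) * (M.choose (y+1) * (y+1)) ≤ (M - 2*z) * M.choose z * (y+1) := by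
    have hz1 : 2*y+1 ≤ M - 2*z := by omega
    calc (2*y+1) * (M.choose (y+1) * (y+1)) = ((2*y+1) * M.choose (y+1)) * (y+1) := by ring
      _ ≤ ((M - 2*z) * M.choose z) * (y+1) := by
          apply Nat.mul_le_mul_right
          exact Nat.mul_le_mul hz1 h1
  have := le_trans key1 key2
  exact Nat.le_of_mul_le_mul_right this (by omega)

-- cross-row identities: (n+1)*C(n,k) = (n+1-k)*C(n+1,k) and (n+1)*C(n,k-1) = k*C(n+1,k)
lemma cross1 (n k : ℕ) : (n+1) * n.choose k = (n + 1 - k) * (n+1).choose k := by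
  rcases Nat.lt_or_ge (n+1) k with hc | hc
  · rw [Nat.choose_eq_zero_of_lt (by omega), Nat.choose_eq_zero_of_lt hc]
    simp
  · have h1 : (n+1) * n.choose k = (n+1).choose (k+1) * (k+1) := Nat.add_one_mul_choose_eq n k
    have h2 : (n+1).choose (k+1) * (k+1) = (n+1).choose k * ((n+1) - k) :=
      Nat.choose_succ_right_eq (n+1) k
    rw [h1, h2]; ring

lemma cross2 (n k : ℕ) : (n+1) * n.choose k = (k+1) * (n+1).choose (k+1) := by
  have h1 : (n+1) * n.choose k = (n+1).choose (k+1) * (k+1) := Nat.add_one_mul_choose_eq n k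
  rw [h1]; ring

lemma W_step_dec {q n x : ℕ} (hq2 : 2 ≤ q) (hn : n ≤ 2*q - 2) (h1 : n ≤ 2*x)
    (h2 : 2*x + 2 ≤ n + q) : W q n (x+1) ≤ W q n x := by
  have hxq : n < x + q := by omega
  rcases Nat.lt_trichotomy (x+1) q with hc | hc | hc
  · rw [W_eq_single (by omega : x < q) hxq, W_eq_single hc (by omega)]
    exact choose_dec h1
  · -- x + 1 = q
    have hqn : q ≤ n := by omega
    rw [W_eq_single (by omega : x < q) hxq]
    rw [W_eq_pair (by omega) (by omega : q ≤ x+1) (by omega) (by omega)]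
    have hz : (x + 1) - q = 0 := by omega
    rw [hz, Nat.choose_zero_right]
    have := choose_dec_strict h1 (by omega : x + 1 ≤ n)
    omega
  · -- q ≤ x
    have hqx : q ≤ x := by omega
    have hx2n : x + 2 ≤ n := by omega
    rw [W_eq_pair (by omega) hqx (by omega) hxq]
    rw [W_eq_pair (by omega) (by omega : q ≤ x+1) (by omega) (by omega)]
    set M := n + 1 with hM
    set y := x + 1 - q with hy
    set z := n - x with hzdef
    have hy1 : 1 ≤ y := by omega
    have hyz : y < z := by omega
    have hsum : 2*y + 2*z + 1 ≤ M := by omega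
    have hcore := core hy1 hyz hsum
    -- symmetries
    have hs1 : n.choose x = n.choose z := by
      rw [show x = n - z by omega]
      exact Nat.choose_symm (by omega)
    have hs2 : n.choose (x+1) = n.choose (z-1) := by
      rw [show x + 1 = n - (z-1) by omega]
      exact Nat.choose_symm (by omega)
    have hxy : x - q = y - 1 := by omega
    rw [hs1, hs2, hxy]
    -- goal: C n (z-1) + C n y ≤ C n z + C n (y-1)
    refine Nat.le_of_mul_le_mul_left ?_ (show 0 < M by omega)
    rw [Nat.mul_add, Nat.mul_add]
    have c1 : M * n.choose (z-1) = z * M.choose z := by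
      have := cross2 n (z-1)
      rwa [show (z-1) + 1 = z by omega] at this
    have c2 : M * n.choose z = (M - z) * M.choose z := cross1 n z
    have c3 : M * n.choose y = (M - y) * M.choose y := cross1 n y
    have c4 : M * n.choose (y-1) = y * M.choose y := by
      have := cross2 n (y-1)
      rwa [show (y-1) + 1 = y by omega] at this
    rw [c1, c2, c3, c4]
    have e1 : M - z = (M - 2*z) + z := by omega
    have e2 : M - y = (M - 2*y) + y := by omega
    rw [e1, e2]
    have expand : z * M.choose z + ((M - 2*y) + y) * M.choose y
        = (M - 2*y) * M.choose y + (z * M.choose z + y * M.choose y) := by ring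
    have expand2 : ((M - 2*z) + z) * M.choose z + y * M.choose y
        = (M - 2*z) * M.choose z + (z * M.choose z + y * M.choose y) := by ring
    rw [expand, expand2]
    exact Nat.add_le_add_right hcore _

def mu (q n j : ℕ) : ℕ := W q n ((n + j) / 2)

def F (q n j : ℕ) : ℕ := ∑ i ∈ Finset.range j, mu q n (i+1)

lemma mu_pascal (q n j : ℕ) : mu q (n+1) (j+1) = mu q n (j+2) + mu q n j := by
  unfold mu
  have h1 : (n + 1 + (j+1))/2 = (n+j)/2 + 1 := by omega
  have h2 : (n + (j+2))/2 = (n+j)/2 + 1 := by omega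
  rw [h1, h2, W_pascal q n ((n+j)/2)]
  omega

lemma mu_zero_one (q n : ℕ) : mu q n 0 = mu q n 1 := by
  unfold mu
  rcases Nat.even_or_odd n with he | ho
  · have : (n + 0)/2 = (n+1)/2 := by
      obtain ⟨k, hk⟩ := he; omega
    rw [this]
  · obtain ⟨k, hk⟩ := ho
    apply W_symm
    have hx : (n+0)/2 = k := by omega
    have hy : (n+1)/2 = k+1 := by omega
    rw [hx, hy]
    have : ((k : ℕ) : ZMod q) + ((k+1 : ℕ) : ZMod q) = ((2*k+1 : ℕ) : ZMod q) := by
      push_cast; ring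
    rw [this, hk]

lemma mu_antitone {q n i : ℕ} (hq2 : 2 ≤ q) (hn : n ≤ 2*q - 2) (hi : 1 ≤ i) (hiq : i + 1 ≤ q) :
    mu q n (i+1) ≤ mu q n i := by
  unfold mu
  rcases Nat.even_or_odd (n + i) with he | ho
  · have : (n + (i+1))/2 = (n+i)/2 := by
      obtain ⟨k, hk⟩ := he; omega
    rw [this]
  · obtain ⟨k, hk⟩ := ho
    have h1 : (n + (i+1))/2 = k + 1 := by omega
    have h2 : (n + i)/2 = k := by omega
    rw [h1, h2]
    exact W_step_dec hq2 hn (by omega) (by omega)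

lemma mu_le {q n i i' : ℕ} (hq2 : 2 ≤ q) (hn : n ≤ 2*q - 2) (hi : 1 ≤ i) (hii : i ≤ i')
    (hiq : i' ≤ q) : mu q n i' ≤ mu q n i := by
  induction i', hii using Nat.le_induction with
  | base => exact le_refl _
  | succ i' hii ih =>
    exact le_trans (mu_antitone hq2 hn (by omega) (by omega)) (ih (by omega))

lemma F_succ (q n j : ℕ) : F q n (j+1) = F q n j + mu q n (j+1) :=
  Finset.sum_range_succ _ j

lemma F_mono {q n : ℕ} {j j' : ℕ} (h : j ≤ j') : F q n j ≤ F q n j' := by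
  induction j', h using Nat.le_induction with
  | base => exact le_refl _
  | succ j' hj ih => rw [F_succ]; omega

lemma F_pascal (q n j : ℕ) (hj : 1 ≤ j) : F q (n+1) j = F q n (j+1) + F q n (j-1) := by
  obtain ⟨j', rfl⟩ : ∃ j', j = j' + 1 := ⟨j - 1, by omega⟩
  have hsplit : F q (n+1) (j'+1)
      = (∑ i ∈ Finset.range (j'+1), mu q n (i+2)) + (∑ i ∈ Finset.range (j'+1), mu q n i) := by
    unfold F
    rw [← Finset.sum_add_distrib]
    apply Finset.sum_congr rfl
    intro i _
    rw [mu_pascal]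
  have hA : F q n (j'+2) = (∑ i ∈ Finset.range (j'+1), mu q n (i+2)) + mu q n 1 := by
    unfold F
    rw [Finset.sum_range_succ' (fun i => mu q n (i+1)) (j'+1)]
  have hB : (∑ i ∈ Finset.range (j'+1), mu q n i) = F q n j' + mu q n 0 := by
    unfold F
    rw [Finset.sum_range_succ' (fun i => mu q n i) j']
  have hz := mu_zero_one q n
  have e1 : (j' + 1) - 1 = j' := by omega
  have e2 : j' + 1 + 1 = j' + 2 := by omega
  rw [e1, e2]
  omega

lemma F_one {q n : ℕ} (hq : (n+1)/2 < q) : F q n 1 = n.choose (n/2) := by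
  have h1 : F q n 1 = mu q n 1 := by
    unfold F
    rw [Finset.sum_range_one]
  rw [h1]
  unfold mu
  rw [W_eq_single (show (n+1)/2 < q by omega) (by omega)]
  rcases Nat.even_or_odd n with he | ho
  · congr 1
    obtain ⟨k, hk⟩ := he; omega
  · obtain ⟨k, hk⟩ := ho
    have h2 : (n+1)/2 = k+1 := by omega
    have h3 : n/2 = k := by omega
    rw [h2, h3]
    have := Nat.choose_symm (show k+1 ≤ n by omega)
    rw [show n - (k+1) = k by omega] at this
    exact this.symm

lemma F_q_pow {q : ℕ} (hq1 : 1 ≤ q) (n : ℕ) : 2^n ≤ F q n q := by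
  induction n with
  | zero =>
    have h1 : F q 0 1 ≤ F q 0 q := F_mono hq1
    have h2 : F q 0 1 = mu q 0 1 := by unfold F; rw [Finset.sum_range_one]
    have h3 : mu q 0 1 = 1 := by
      unfold mu W
      simp
    omega
  | succ n ih =>
    have hp : F q (n+1) q = F q n (q+1) + F q n (q-1) := F_pascal q n q hq1
    have hs1 : F q n (q+1) = F q n q + mu q n (q+1) := F_succ q n q
    have hs2 : F q n ((q-1)+1) = F q n (q-1) + mu q n ((q-1)+1) := F_succ q n (q-1)
    rw [show (q-1)+1 = q by omega] at hs2
    have hmm : mu q n (q+1) = mu q n q := by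
      unfold mu
      rcases Nat.even_or_odd (n + q) with he | ho
      · have : (n + (q+1))/2 = (n+q)/2 := by obtain ⟨k, hk⟩ := he; omega
        rw [this]
      · obtain ⟨k, hk⟩ := ho
        have h1 : (n + (q+1))/2 = k+1 := by omega
        have h2 : (n + q)/2 = k := by omega
        rw [h1, h2]
        apply W_symm
        have : ((k+1 : ℕ) : ZMod q) + ((k : ℕ) : ZMod q) = ((2*k+1 : ℕ) : ZMod q) := by
          push_cast; ring
        rw [this, ← hk]
        push_cast [ZMod.natCast_self]
        ring
    have hpow : 2^(n+1) = 2^n + 2^n := by ring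
    omega


lemma F_zero (q n : ℕ) : F q n 0 = 0 := by
  unfold F
  simp

lemma F_zero_one (q : ℕ) : F q 0 1 = 1 := by
  unfold F mu W
  rw [Finset.sum_range_one, Finset.sum_range_one]
  norm_num

lemma conc {q n : ℕ} (hq2 : 2 ≤ q) (hn : n ≤ 2*q - 2) :
    ∀ (k j u d : ℕ), u = j + 1 + k → u + d = 2*j → k + 1 ≤ j → u ≤ q →
      F q n u + F q n d ≤ F q n (j+1) + F q n (j-1) := by
  intro k
  induction k with
  | zero =>
    intro j u d hu hud hkj huq
    have h1 : u = j + 1 := by omega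
    have h2 : d = j - 1 := by omega
    rw [h1, h2]
  | succ k ih =>
    intro j u d hu hud hkj huq
    have hu1 : u = (j + 1 + k) + 1 := by omega
    have hd1 : d + 1 = 2*j - (j + 1 + k) := by omega
    have hF1 : F q n u = F q n (j+1+k) + mu q n (j+1+k+1) := by
      rw [hu1]; exact F_succ q n (j+1+k)
    have hF2 : F q n (d+1) = F q n d + mu q n (d+1) := F_succ q n d
    have hmu : mu q n (j+1+k+1) ≤ mu q n (d+1) := by
      apply mu_le hq2 hn (by omega) (by omega) (by omega)
    have hih := ih j (j+1+k) (d+1) (by omega) (by omega) (by omega) (by omega)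
    omega

lemma count_le {q : ℕ} [NeZero q] (hq2 : 2 ≤ q) {ι : Type*} [DecidableEq ι] (a : ι → ZMod q) :
    ∀ (s : Finset ι), (∀ i ∈ s, IsUnit (a i)) → s.card ≤ 2*q - 2 →
    ∀ T : Finset (ZMod q),
      ((s.powerset).filter (fun I => (∑ i ∈ I, a i) ∈ T)).card ≤ F q s.card T.card := by
  intro s
  induction s using Finset.induction_on with
  | empty =>
    intro _ _ T
    rcases Nat.eq_zero_or_pos T.card with hT | hT
    · rw [Finset.card_eq_zero] at hT
      subst hT
      simp
    · have h1 : ((∅ : Finset ι).powerset.filter (fun I => (∑ i ∈ I, a i) ∈ T)).card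
          ≤ (∅ : Finset ι).powerset.card := Finset.card_filter_le _ _
      rw [Finset.powerset_empty, Finset.card_singleton] at h1
      calc _ ≤ 1 := h1
        _ = F q 0 1 := (F_zero_one q).symm
        _ ≤ F q (∅ : Finset ι).card T.card := by
            rw [Finset.card_empty]; exact F_mono (by omega)
  | @insert x s hxs ih =>
    intro hunit hcard T
    have hcs : (insert x s).card = s.card + 1 := Finset.card_insert_of_notMem hxs
    have hscard : s.card ≤ 2*q - 2 := by omega
    have hax : IsUnit (a x) := hunit x (Finset.mem_insert_self x s)
    set j := T.card with hj
    -- trivial cases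
    rcases Nat.eq_zero_or_pos j with hj0 | hj1
    · rw [Finset.card_eq_zero] at hj0
      subst hj0
      simp
    have hjq : j ≤ q := by
      calc j = T.card := rfl
        _ ≤ Fintype.card (ZMod q) := Finset.card_le_univ T
        _ = q := ZMod.card q
    rcases Nat.eq_or_lt_of_le hjq with hjq' | hjq'
    · -- T = univ
      have hTuniv : T = Finset.univ := by
        apply Finset.eq_univ_of_card
        rw [← hj, hjq', ZMod.card]
      subst hTuniv
      have hfull : ((insert x s).powerset.filter
            (fun I => (∑ i ∈ I, a i) ∈ (Finset.univ : Finset (ZMod q)))).card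
          = 2 ^ (insert x s).card := by
        rw [Finset.filter_true_of_mem (fun _ _ => Finset.mem_univ _), Finset.card_powerset]
      rw [hfull, hjq', hcs]
      calc 2 ^ (s.card + 1) ≤ F q (s.card + 1) q := F_q_pow (by omega) _
        _ = F q (s.card + 1) q := rfl
    -- main case : 1 ≤ j ≤ q - 1
    set T' := T.image (fun z => z - a x) with hT'def
    have hT'card : T'.card = T.card :=
      Finset.card_image_of_injective T (sub_left_injective)
    -- split the count
    have hsplit : ((insert x s).powerset.filter (fun I => (∑ i ∈ I, a i) ∈ T)).card
        = (s.powerset.filter (fun I => (∑ i ∈ I, a i) ∈ T)).card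
          + (s.powerset.filter (fun I => (∑ i ∈ I, a i) ∈ T')).card := by
      rw [Finset.powerset_insert, Finset.filter_union]
      have hdisj : Disjoint s.powerset (s.powerset.image (insert x)) := by
        rw [Finset.disjoint_left]
        intro I hI hI2
        rw [Finset.mem_image] at hI2
        obtain ⟨J, hJ, rfl⟩ := hI2
        rw [Finset.mem_powerset] at hI
        exact hxs (hI (Finset.mem_insert_self x J))
      rw [Finset.card_union_of_disjoint (Finset.disjoint_filter_filter hdisj)]
      congr 1
      apply Finset.card_nbij' (fun I => I.erase x) (fun J => insert x J)
      · intro I hI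
        simp only [Finset.mem_coe, Finset.mem_filter, Finset.mem_image] at hI
        obtain ⟨⟨J, hJ, rfl⟩, hsum⟩ := hI
        rw [Finset.mem_powerset] at hJ
        have hxJ : x ∉ J := fun hc => hxs (hJ hc)
        simp only [Finset.erase_insert hxJ, Finset.mem_coe]
        simp only [Finset.mem_filter, Finset.mem_powerset]
        refine ⟨hJ, ?_⟩
        rw [Finset.sum_insert hxJ] at hsum
        rw [hT'def, Finset.mem_image]
        exact ⟨a x + ∑ i ∈ J, a i, hsum, by ring⟩
      · intro J hJ
        simp only [Finset.mem_coe, Finset.mem_filter, Finset.mem_powerset] at hJ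
        obtain ⟨hJs, hsum⟩ := hJ
        have hxJ : x ∉ J := fun hc => hxs (hJs hc)
        simp only [Finset.mem_coe, Finset.mem_filter, Finset.mem_image]
        constructor
        · exact ⟨J, Finset.mem_powerset.mpr hJs, rfl⟩
        · rw [Finset.sum_insert hxJ]
          rw [hT'def, Finset.mem_image] at hsum
          obtain ⟨t, ht, hts⟩ := hsum
          have heq : a x + ∑ i ∈ J, a i = t := by rw [← hts]; ring
          rwa [heq]
      · intro I hI
        simp only [Finset.mem_coe, Finset.mem_filter, Finset.mem_image] at hI
        obtain ⟨⟨J, hJ, rfl⟩, _⟩ := hI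
        rw [Finset.mem_powerset] at hJ
        have hxJ : x ∉ J := fun hc => hxs (hJ hc)
        simp only [Finset.erase_insert hxJ, Finset.mem_coe]
      · intro J hJ
        simp only [Finset.mem_coe, Finset.mem_filter, Finset.mem_powerset] at hJ
        have hxJ : x ∉ J := fun hc => hxs (hJ.1 hc)
        simp only [Finset.erase_insert hxJ, Finset.mem_coe]
    -- combine T and T'
    have hcomb : (s.powerset.filter (fun I => (∑ i ∈ I, a i) ∈ T)).card
          + (s.powerset.filter (fun I => (∑ i ∈ I, a i) ∈ T')).card
        = (s.powerset.filter (fun I => (∑ i ∈ I, a i) ∈ T ∪ T')).card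
          + (s.powerset.filter (fun I => (∑ i ∈ I, a i) ∈ T ∩ T')).card := by
      have h1 : s.powerset.filter (fun I => (∑ i ∈ I, a i) ∈ T ∪ T')
          = s.powerset.filter (fun I => (∑ i ∈ I, a i) ∈ T)
            ∪ s.powerset.filter (fun I => (∑ i ∈ I, a i) ∈ T') := by
        ext I
        simp only [Finset.mem_filter, Finset.mem_union]
        tauto
      have h2 : s.powerset.filter (fun I => (∑ i ∈ I, a i) ∈ T ∩ T')
          = s.powerset.filter (fun I => (∑ i ∈ I, a i) ∈ T)
            ∩ s.powerset.filter (fun I => (∑ i ∈ I, a i) ∈ T') := by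
        ext I
        simp only [Finset.mem_filter, Finset.mem_inter]
        tauto
      rw [h1, h2, Finset.card_union_add_card_inter]
    -- cardinalities
    set u := (T ∪ T').card with hu
    set d := (T ∩ T').card with hd
    have hud : u + d = 2*j := by
      rw [hu, hd, Finset.card_union_add_card_inter, hT'card]
      omega
    have huq : u ≤ q := by
      calc u ≤ Fintype.card (ZMod q) := Finset.card_le_univ _
        _ = q := ZMod.card q
    -- d < j
    have hdj : d < j := by
      by_contra hcon
      push_neg at hcon
      have hsub : T ∩ T' ⊆ T := Finset.inter_subset_left
      have heq1 : T ∩ T' = T := Finset.eq_of_subset_of_card_le hsub (by omega)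
      have hTsub : T ⊆ T' := by
        intro t ht
        have : t ∈ T ∩ T' := by rw [heq1]; exact ht
        exact (Finset.mem_inter.mp this).2
      have heq2 : T = T' := Finset.eq_of_subset_of_card_le hTsub (by omega)
      have hclose : ∀ t ∈ T, t - a x ∈ T := by
        intro t ht
        rw [heq2, hT'def]
        exact Finset.mem_image_of_mem _ ht
      obtain ⟨t₀, ht₀⟩ := Finset.card_pos.mp (by omega : 0 < T.card)
      have hiter : ∀ (k : ℕ), t₀ - (k : ZMod q) * a x ∈ T := by
        intro k
        induction k with
        | zero => simpa using ht₀
        | succ k ihk =>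
          have := hclose _ ihk
          have heq : t₀ - (k : ZMod q) * a x - a x = t₀ - ((k+1 : ℕ) : ZMod q) * a x := by
            push_cast; ring
          rwa [heq] at this
      have hmul : ∀ c : ZMod q, ∃ k : ℕ, (k : ZMod q) * a x = c := by
        intro c
        obtain ⟨v, hv⟩ := hax
        refine ⟨(c * ((v⁻¹ : (ZMod q)ˣ) : ZMod q)).val, ?_⟩
        have hval : (((c * ((v⁻¹ : (ZMod q)ˣ) : ZMod q)).val : ℕ) : ZMod q)
            = c * ((v⁻¹ : (ZMod q)ˣ) : ZMod q) := ZMod.natCast_rightInverse _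
        rw [hval, ← hv, mul_assoc, Units.inv_mul, mul_one]
      have hTuniv : T = Finset.univ := by
        apply Finset.eq_univ_iff_forall.mpr
        intro z
        obtain ⟨k, hk⟩ := hmul (t₀ - z)
        have hz : t₀ - (k : ZMod q) * a x = z := by rw [hk]; ring
        rw [← hz]
        exact hiter k
      have : T.card = q := by rw [hTuniv, Finset.card_univ, ZMod.card]
      omega
    -- assemble
    rw [hsplit, hcomb]
    have hih1 := ih (fun i hi => hunit i (Finset.mem_insert_of_mem hi)) hscard (T ∪ T')
    have hih2 := ih (fun i hi => hunit i (Finset.mem_insert_of_mem hi)) hscard (T ∩ T')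
    rw [← hu] at hih1
    rw [← hd] at hih2
    have hconc := conc hq2 hscard (u - (j+1)) j u d (by omega) hud (by omega) huq
    have hpas : F q (s.card + 1) j = F q s.card (j+1) + F q s.card (j-1) :=
      F_pascal q s.card j (by omega)
    rw [hcs, hpas]
    omega

end VW

theorem vaughan_wooley (q n : ℕ) [NeZero q] (hq : q > (n + 1) / 2)
    (a : Fin n → ZMod q) (ha : ∀ i, IsUnit (a i)) :
    ((Finset.univ : Finset (Finset (Fin n))).filter
        (fun I => (∑ i ∈ I, a i) = 0)).card ≤ n.choose (n / 2) := by
  rcases Nat.eq_zero_or_pos n with rfl | hn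
  · have h := Finset.card_filter_le (Finset.univ : Finset (Finset (Fin 0)))
      (fun I => (∑ i ∈ I, a i) = 0)
    simpa using h
  · have hq2 : 2 ≤ q := by omega
    have hcard : (Finset.univ : Finset (Fin n)).card ≤ 2*q - 2 := by
      rw [Finset.card_univ, Fintype.card_fin]; omega
    have h := VW.count_le hq2 a Finset.univ (fun i _ => ha i) hcard {0}
    rw [Finset.powerset_univ] at h
    have hpred : (Finset.univ : Finset (Finset (Fin n))).filter
          (fun I => (∑ i ∈ I, a i) = 0)
        = (Finset.univ : Finset (Finset (Fin n))).filter
          (fun I => (∑ i ∈ I, a i) ∈ ({0} : Finset (ZMod q))) := by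
      apply Finset.filter_congr
      intro I _
      simp
    rw [hpred]
    have hc1 : (Finset.univ : Finset (Fin n)).card = n := by
      rw [Finset.card_univ, Fintype.card_fin]
    have hc2 : ({0} : Finset (ZMod q)).card = 1 := Finset.card_singleton 0
    rw [hc1, hc2] at h
    rwa [VW.F_one (by omega)] at h
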